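/- Let H be a finite-dimensional complex Hilbert space, U ⊆ H a subspace, and k a positive integer. Then (U ⊗ H^{⊗(k−1)}) ∩ S^k(H) = S^k(U), where S^k(U) denotes the symmetric subspace of U^{⊗k} viewed inside H^{⊗k}. -/

import Mathlib

noncomputable section

open Finset

lemma aux_delta {n m : ℕ} (x : Fin m → Fin n) (v : (Fin m → Fin n) → ℂ) :
    ∑ y : Fin m → Fin n, (∏ t, if y t = x t then (1:ℂ) else 0) * v y = v x := by
  rw [Finset.sum_eq_single x]
  · simp
  · intro y _ hyx
    have : ∃ t, y t ≠ x t := by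
      by_contra h; push_neg at h; exact hyx (funext h)
    obtain ⟨t, ht⟩ := this
    rw [Finset.prod_eq_zero (Finset.mem_univ t) (by simp [ht]), zero_mul]
  · simp

lemma key {n k : ℕ} (a : Fin n → Fin n → ℂ) (v : (Fin (k+1) → Fin n) → ℂ)
    (hT : ∀ (t₀ : Fin (k+1)) (y : Fin (k+1) → Fin n),
      ∑ j, a (y t₀) j * v (Function.update y t₀ j) = v y)
    (x : Fin (k+1) → Fin n) :
    v x = ∑ y, (∏ t, a (x t) (y t)) * v y := by
  have main : ∀ m, m ≤ k + 1 →
      v x = ∑ y, (∏ t : Fin (k+1), if (t:ℕ) < m then a (x t) (y t)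
        else if y t = x t then 1 else 0) * v y := by
    intro m
    induction m with
    | zero =>
      intro _
      simp only [Nat.not_lt_zero, if_false]
      exact (aux_delta x v).symm
    | succ m ih =>
      intro hm
      set t₀ : Fin (k+1) := ⟨m, hm⟩ with ht₀
      have hc : ∀ (t : Fin (k+1)), t ≠ t₀ → ((t:ℕ) < m + 1 ↔ (t:ℕ) < m) := by
        intro t ht
        have : (t:ℕ) ≠ m := fun h => ht (Fin.ext h)
        omega
      rw [ih (Nat.le_of_succ_le hm)]
      -- replace v y by hT t₀ y
      rw [Finset.sum_congr rfl (fun y _ => by rw [← hT t₀ y] :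
        ∀ y ∈ Finset.univ, (∏ t : Fin (k+1), if (t:ℕ) < m then a (x t) (y t)
            else if y t = x t then 1 else 0) * v y
          = (∏ t : Fin (k+1), if (t:ℕ) < m then a (x t) (y t)
            else if y t = x t then 1 else 0) * ∑ j, a (y t₀) j * v (Function.update y t₀ j))]
      -- turn into double sum
      rw [show (∑ y : Fin (k+1) → Fin n, (∏ t : Fin (k+1), if (t:ℕ) < m then a (x t) (y t)
            else if y t = x t then 1 else 0) * ∑ j, a (y t₀) j * v (Function.update y t₀ j))
          = ∑ p : (Fin (k+1) → Fin n) × Fin n,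
            (∏ t : Fin (k+1), if (t:ℕ) < m then a (x t) (p.1 t)
              else if p.1 t = x t then 1 else 0) * (a (p.1 t₀) p.2 * v (Function.update p.1 t₀ p.2))
          from by rw [Fintype.sum_prod_type]; simp [Finset.mul_sum]]
      -- reindex by the involution (y, j) ↦ (update y t₀ j, y t₀)
      have hinv : Function.Involutive
          (fun p : (Fin (k+1) → Fin n) × Fin n => (Function.update p.1 t₀ p.2, p.1 t₀)) := by
        intro p
        simp [Function.update_idem, Function.update_eq_self]
      rw [← Equiv.sum_comp (Function.Involutive.toPerm _ hinv)
            (fun p : (Fin (k+1) → Fin n) × Fin n =>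
            (∏ t : Fin (k+1), if (t:ℕ) < m then a (x t) (p.1 t)
              else if p.1 t = x t then 1 else 0) * (a (p.1 t₀) p.2 * v (Function.update p.1 t₀ p.2)))]
      rw [Function.Involutive.coe_toPerm]
      rw [Fintype.sum_prod_type]
      refine Finset.sum_congr rfl fun y _ => ?_
      -- now fixed y, sum over j
      have e1 : ∀ j : Fin n,
          (∏ t : Fin (k+1), if (t:ℕ) < m then a (x t) (Function.update y t₀ j t)
            else if Function.update y t₀ j t = x t then 1 else 0)
          = (if j = x t₀ then 1 else 0) *
            ∏ t ∈ ({t₀}ᶜ : Finset (Fin (k+1))),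
              (if (t:ℕ) < m then a (x t) (y t) else if y t = x t then 1 else 0) := by
        intro j
        rw [Fintype.prod_eq_mul_prod_compl t₀]
        simp only [Function.update_self]
        rw [if_neg (by simp [ht₀])]
        congr 1
        refine Finset.prod_congr rfl fun t ht => ?_
        have htne : t ≠ t₀ := by simpa using ht
        rw [Function.update_of_ne htne]
      simp only [e1]
      rw [Fintype.prod_eq_mul_prod_compl t₀
        (fun t => if (t:ℕ) < m + 1 then a (x t) (y t) else if y t = x t then 1 else 0)]
      have e2 : (∏ t ∈ ({t₀}ᶜ : Finset (Fin (k+1))),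
            (if (t:ℕ) < m + 1 then a (x t) (y t) else if y t = x t then 1 else 0))
          = ∏ t ∈ ({t₀}ᶜ : Finset (Fin (k+1))),
            (if (t:ℕ) < m then a (x t) (y t) else if y t = x t then 1 else 0) := by
        refine Finset.prod_congr rfl fun t ht => ?_
        have htne : t ≠ t₀ := by simpa using ht
        simp only [hc t htne]
      rw [e2]
      rw [if_pos (by simp [ht₀])]
      rw [Finset.sum_eq_single (x t₀)]
      · simp only [if_pos rfl, one_mul, if_true, Function.update_idem, Function.update_self,
          Function.update_eq_self]
        ring
      · intro j _ hj
        rw [if_neg hj, zero_mul, zero_mul]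
      · simp
  have h := main (k+1) le_rfl
  simpa [Fin.is_lt, Fin.is_le] using h

lemma matrix_apply {n : ℕ} (p : (Fin n → ℂ) →ₗ[ℂ] (Fin n → ℂ)) (f : Fin n → ℂ) (i : Fin n) :
    ∑ j, p (Pi.single j 1) i * f j = p f i := by
  have : f = ∑ j, f j • (Pi.single j 1 : Fin n → ℂ) := by
    ext i; simp [Pi.single_apply]
  conv_rhs => rw [this]
  simp [Finset.sum_apply, mul_comm]

lemma slice_mem {n k : ℕ} (U : Submodule ℂ (Fin n → ℂ)) (v : (Fin (k + 1) → Fin n) → ℂ)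
    (hv : v ∈ Submodule.span ℂ {v : (Fin (k + 1) → Fin n) → ℂ |
        ∃ u : Fin n → ℂ, u ∈ U ∧ ∃ w : (Fin k → Fin n) → ℂ,
          v = fun x => u (x 0) * w (Fin.tail x)})
    (z : Fin k → Fin n) : (fun i => v (Fin.cons i z)) ∈ U := by
  let W : Submodule ℂ ((Fin (k + 1) → Fin n) → ℂ) :=
    { carrier := {v | ∀ z : Fin k → Fin n, (fun i => v (Fin.cons i z)) ∈ U}
      add_mem' := by
        intro a b ha hb z
        exact U.add_mem (ha z) (hb z)
      zero_mem' := by intro z; exact U.zero_mem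
      smul_mem' := by
        intro c a ha z
        exact U.smul_mem c (ha z) }
  have : v ∈ W := by
    refine Submodule.span_le.mpr ?_ hv
    rintro _ ⟨u, hu, w, rfl⟩ z
    simp only [Fin.cons_zero, Fin.tail_cons]
    have : (fun i => u i * w z) = w z • u := by
      funext i; simp [mul_comm]
    rw [this]
    exact U.smul_mem _ hu
  exact this z

lemma hT_of_sym {n k : ℕ} (U : Submodule ℂ (Fin n → ℂ))
    (p : (Fin n → ℂ) →ₗ[ℂ] (Fin n → ℂ)) (hp1 : ∀ u ∈ U, p u = u)
    (v : (Fin (k + 1) → Fin n) → ℂ)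
    (hsym : ∀ σ : Equiv.Perm (Fin (k + 1)), ∀ x, v (x ∘ σ) = v x)
    (hslice : ∀ z : Fin k → Fin n, (fun i => v (Fin.cons i z)) ∈ U)
    (t₀ : Fin (k + 1)) (y : Fin (k + 1) → Fin n) :
    ∑ j, p (Pi.single j 1) (y t₀) * v (Function.update y t₀ j) = v y := by
  set z : Fin k → Fin n := fun s => y (Equiv.swap 0 t₀ s.succ) with hz
  have hupd : ∀ i : Fin n, v (Function.update y t₀ i) = v (Fin.cons i z) := by
    intro i
    have hfun : Fin.cons i z = (Function.update y t₀ i) ∘ (Equiv.swap 0 t₀) := by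
      funext s
      refine Fin.cases ?_ (fun s => ?_) s
      · simp [Equiv.swap_apply_def]
      · have hne : Equiv.swap 0 t₀ s.succ ≠ t₀ := by
          intro h
          have : s.succ = (0 : Fin (k + 1)) := by
            have := (Equiv.swap 0 t₀).injective (h.trans (Equiv.swap_apply_left 0 t₀).symm)
            exact this
          exact Fin.succ_ne_zero s this
        simp [Fin.cons_succ, hz, Function.update_of_ne hne]
    rw [hfun, hsym (Equiv.swap 0 t₀)]
  have hw : (fun i => v (Fin.cons i z)) ∈ U := hslice z
  calc ∑ j, p (Pi.single j 1) (y t₀) * v (Function.update y t₀ j)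
      = ∑ j, p (Pi.single j 1) (y t₀) * (fun i => v (Fin.cons i z)) j := by
        refine Finset.sum_congr rfl fun j _ => ?_
        rw [hupd j]
    _ = p (fun i => v (Fin.cons i z)) (y t₀) := matrix_apply _ _ _
    _ = v (Fin.cons (y t₀) z) := by rw [hp1 _ hw]
    _ = v y := by
        rw [← hupd (y t₀), Function.update_eq_self]

/-- The symmetric subspace `S^m(H) ⊆ H^{⊗m}`. -/
def symSpace (n m : ℕ) : Submodule ℂ ((Fin m → Fin n) → ℂ) where
  carrier := {v | ∀ σ : Equiv.Perm (Fin m), ∀ x, v (x ∘ σ) = v x}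
  add_mem' := by
    intro a b ha hb σ x
    simp [ha σ x, hb σ x]
  zero_mem' := by intro σ x; rfl
  smul_mem' := by
    intro c a ha σ x
    simp [ha σ x]

/-- `(U ⊗ H^{⊗(k−1)}) ∩ S^k(H) = S^k(U)`, where `S^k(U)` is the symmetric subspace of
`U^{⊗k}` viewed inside `H^{⊗k}`.  (The positive integer `k` is encoded as `k+1`; the subspace
`U ⊗ H^{⊗k}` is spanned by tensors whose first factor lies in `U`, and `U^{⊗(k+1)}` is spanned
by elementary tensors of vectors of `U`.) -/
theorem stmt13 {n k : ℕ} (U : Submodule ℂ (Fin n → ℂ)) :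
    (Submodule.span ℂ {v : (Fin (k + 1) → Fin n) → ℂ |
        ∃ u : Fin n → ℂ, u ∈ U ∧ ∃ w : (Fin k → Fin n) → ℂ,
          v = fun x => u (x 0) * w (Fin.tail x)}) ⊓ symSpace n (k + 1) =
      (Submodule.span ℂ {v : (Fin (k + 1) → Fin n) → ℂ |
        ∃ u : Fin (k + 1) → (Fin n → ℂ), (∀ t, u t ∈ U) ∧
          v = fun x => ∏ t, u t (x t)}) ⊓ symSpace n (k + 1) := by
  apply le_antisymm
  · rintro v ⟨hv1, hv2⟩
    refine ⟨?_, hv2⟩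
    obtain ⟨q, hq⟩ := Submodule.exists_isCompl U
    set p : (Fin n → ℂ) →ₗ[ℂ] (Fin n → ℂ) :=
      U.subtype ∘ₗ Submodule.projectionOnto U q hq with hp
    have hp1 : ∀ u ∈ U, p u = u := by
      intro u hu
      simp [hp, Submodule.projectionOnto_apply_left hq ⟨u, hu⟩]
    have hp2 : ∀ f, p f ∈ U := by intro f; simp [hp]
    have hslice := slice_mem U v hv1
    have hsym : ∀ σ : Equiv.Perm (Fin (k + 1)), ∀ x, v (x ∘ σ) = v x := hv2
    have hT := hT_of_sym U p hp1 v hsym hslice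
    have hkey := key (fun i j => p (Pi.single j 1) i) v hT
    have hrep : v = ∑ y : Fin (k + 1) → Fin n,
        v y • (fun x => ∏ t, p (Pi.single (y t) 1) (x t)) := by
      funext x
      rw [hkey x, Finset.sum_apply]
      refine Finset.sum_congr rfl fun y _ => ?_
      simp [mul_comm]
    rw [hrep]
    refine Submodule.sum_mem _ fun y _ => Submodule.smul_mem _ _ ?_
    exact Submodule.subset_span ⟨fun t => p (Pi.single (y t) 1), fun t => hp2 _, rfl⟩
  · rintro v ⟨hv1, hv2⟩
    refine ⟨?_, hv2⟩
    refine Submodule.span_le.mpr ?_ hv1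
    rintro _ ⟨u, hu, rfl⟩
    refine Submodule.subset_span ⟨u 0, hu 0, fun z => ∏ t : Fin k, u t.succ (z t), ?_⟩
    funext x
    rw [Fin.prod_univ_succ]
    rfl
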